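/- Under the interpolant hypothesis ‖f − I_h f‖_{V^s}² ≤ c₀ h² ‖f‖_{V^{s+α}}² and the condition μ c₀ h² ≤ ν, the V^s-level nudging estimate holds for any s ≥ 0: −μ⟨I_h(w), A^s w⟩ ≤ (ν/2)‖w‖_{V^{s+α}}² − (μ/2)‖w‖_{V^s}², provided I_h commutes with A^{s/2} (i.e., A^{s/2} I_h(w) = I_h(A^{s/2} w)). -/
import Mathlib


open Real RealInnerProductSpace
noncomputable section

/-- `V^s`-level nudging estimate: with `Ash = A^{s/2}` symmetric, `Aah = A^{α/2}`,
a linear interpolant `Ih` commuting with `A^{s/2}` and satisfying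
`‖f - I_h f‖_{V^s}² ≤ c₀ h² ‖f‖_{V^{s+α}}²`, and `μ c₀ h² ≤ ν`, one has
`-μ⟨I_h w, A^s w⟩ ≤ (ν/2)‖w‖_{V^{s+α}}² - (μ/2)‖w‖_{V^s}²`. -/
theorem nudging_estimate_Vs {H : Type*} [NormedAddCommGroup H] [InnerProductSpace ℝ H]
    (Ash Aah Ih : H →ₗ[ℝ] H) (μ ν c₀ h : ℝ)
    (hμ : 0 < μ) (hν : 0 < ν) (hc : 0 < c₀) (hh : 0 < h)
    (hsym : ∀ x y : H, ⟪Ash x, y⟫ = ⟪x, Ash y⟫)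
    (hcomm : ∀ x : H, Ash (Ih x) = Ih (Ash x))
    (hinterp : ∀ f : H, ‖Ash (f - Ih f)‖^2 ≤ c₀ * h^2 * ‖Aah (Ash f)‖^2)
    (hcond : μ * c₀ * h^2 ≤ ν) (w : H) :
    -(μ * ⟪Ih w, Ash (Ash w)⟫) ≤ (ν/2) * ‖Aah (Ash w)‖^2 - (μ/2) * ‖Ash w‖^2 := by
  have key : ⟪Ih w, Ash (Ash w)⟫ = ‖Ash w‖^2 - ⟪Ash (w - Ih w), Ash w⟫ := by
    rw [← hsym (Ih w) (Ash w), map_sub, inner_sub_left,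
      real_inner_self_eq_norm_sq]
    ring
  have hCS : ⟪Ash (w - Ih w), Ash w⟫ ≤ ‖Ash (w - Ih w)‖ * ‖Ash w‖ :=
    real_inner_le_norm _ _
  have hI := hinterp w
  have ha : (0:ℝ) ≤ ‖Aah (Ash w)‖^2 := sq_nonneg _
  nlinarith [sq_nonneg (‖Ash (w - Ih w)‖ - ‖Ash w‖), mul_le_mul_of_nonneg_left hCS hμ.le,
    mul_le_mul_of_nonneg_right hcond ha, sq_nonneg ‖Ash w‖]
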